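/- arXiv:2410.07913 — 6 statements merged into one kernel-verified Lean document; each statement's English description precedes it below -/
import Mathlib

section
/- Let m ≥ 2 be an integer and let F(t) ∈ Q(v)[[t]] be the unique series with F(0)=1 satisfying F(t) = Π_{i=1}^{m} (1 − v^{2i−m−1} t Π_{j=1}^{m−2} F(v^{2i−2j−2} t))^{−1}. Then F satisfies the v-difference equation ΔF(t) = ∇^{(m−1)}(t·Π_{i=1}^{m−1} F(v^{m−2i} t)), where (ΔF)(t) = (F(vt) − F(v^{−1}t))/(v − v^{−1}) and (∇^{(k)}B)(t) = (v·B(v^k t) − v^{−1}·B(v^{−k} t))/(v − v^{−1}). -/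
open PowerSeries Finset

noncomputable section

/-- The field `ℚ(v)` of rational functions. -/
abbrev K : Type := RatFunc ℚ

/-- The variable `v`. -/
def v : K := RatFunc.X

/-- `scale a B` is the series `B(v^a t)`: the `t^d`-coefficient is multiplied by `v^(a*d)`. -/
def scale (a : ℤ) (B : PowerSeries K) : PowerSeries K :=
  PowerSeries.mk fun d => v ^ (a * d) * PowerSeries.coeff d B

/-- `(ΔB)(t) = (B(vt) - B(v⁻¹t))/(v - v⁻¹)`. -/
def delta (B : PowerSeries K) : PowerSeries K :=
  PowerSeries.C ((v - v⁻¹)⁻¹) * (scale 1 B - scale (-1) B)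

/-- `(∇^(k)B)(t) = (v·B(v^k t) - v⁻¹·B(v^{-k} t))/(v - v⁻¹)`. -/
def nabla (k : ℤ) (B : PowerSeries K) : PowerSeries K :=
  PowerSeries.C ((v - v⁻¹)⁻¹) *
    (PowerSeries.C v * scale k B - PowerSeries.C v⁻¹ * scale (-k) B)


/-- The right-hand side of the algebraic functional equation:
`Π_{i=1}^{m} (1 - v^(2i-m-1)·t·Π_{j=1}^{m-2} F(v^(2i-2j-2) t))⁻¹`. -/
def rhsF (m : ℕ) (F : PowerSeries K) : PowerSeries K :=
  ∏ i ∈ Finset.Icc 1 m,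
    (1 - PowerSeries.C (v ^ (2 * (i : ℤ) - m - 1)) * PowerSeries.X *
        ∏ j ∈ Finset.Icc 1 (m - 2), scale (2 * (i : ℤ) - 2 * (j : ℤ) - 2) F)⁻¹

lemma v_ne_zero : v ≠ 0 := RatFunc.X_ne_zero

lemma scale_eq_rescale (a : ℤ) (B : PowerSeries K) :
    scale a B = PowerSeries.rescale (v ^ a) B := by
  ext d
  rw [PowerSeries.coeff_rescale]
  simp only [scale, PowerSeries.coeff_mk]
  rw [← zpow_natCast (v ^ a) d, ← zpow_mul]

lemma scale_mul (a : ℤ) (B C : PowerSeries K) :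
    scale a (B * C) = scale a B * scale a C := by
  simp [scale_eq_rescale, map_mul]

lemma scale_one_eq (a : ℤ) : scale a (1 : PowerSeries K) = 1 := by
  simp [scale_eq_rescale]

lemma scale_C (a : ℤ) (c : K) : scale a (PowerSeries.C c) = PowerSeries.C c := by
  ext d
  simp only [scale_eq_rescale, PowerSeries.coeff_rescale, PowerSeries.coeff_C]
  split <;> simp_all

lemma scale_X (a : ℤ) : scale a (PowerSeries.X : PowerSeries K)
    = PowerSeries.C (v ^ a) * PowerSeries.X := by
  simp [scale_eq_rescale, PowerSeries.rescale_X]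

lemma scale_scale (a b : ℤ) (B : PowerSeries K) :
    scale a (scale b B) = scale (a + b) B := by
  simp only [scale_eq_rescale, PowerSeries.rescale_rescale]
  rw [← zpow_add₀ v_ne_zero]
  ring_nf

lemma scale_sub (a : ℤ) (B C : PowerSeries K) :
    scale a (B - C) = scale a B - scale a C := by
  simp [scale_eq_rescale, map_sub]

lemma scale_prod {ι : Type*} (a : ℤ) (s : Finset ι) (f : ι → PowerSeries K) :
    scale a (∏ i ∈ s, f i) = ∏ i ∈ s, scale a (f i) := by
  simp [scale_eq_rescale, map_prod]

lemma scale_congr {a b : ℤ} (h : a = b) (B : PowerSeries K) : scale a B = scale b B := by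
  rw [h]

lemma prod_Icc_one (n : ℕ) (f : ℕ → PowerSeries K) :
    ∏ i ∈ Finset.Icc 1 n, f i = ∏ i ∈ Finset.range n, f (1 + i) := by
  rw [← Finset.Ico_add_one_right_eq_Icc, Finset.prod_Ico_eq_prod_range]
  simp

/-- The `i`-th factor (without inverse) of the functional equation. -/
def uu (m : ℕ) (F : PowerSeries K) (i : ℕ) : PowerSeries K :=
  1 - PowerSeries.C (v ^ (2 * (i : ℤ) - m - 1)) * PowerSeries.X *
      ∏ j ∈ Finset.Icc 1 (m - 2), scale (2 * (i : ℤ) - 2 * (j : ℤ) - 2) F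

lemma rhsF_eq (m : ℕ) (F : PowerSeries K) :
    rhsF m F = ∏ i ∈ Finset.Icc 1 m, (uu m F i)⁻¹ := rfl

lemma const_uu (m : ℕ) (F : PowerSeries K) (i : ℕ) :
    PowerSeries.constantCoeff (uu m F i) = 1 := by
  simp [uu]

lemma scale_uu (m : ℕ) (F : PowerSeries K) (a : ℤ) (i : ℕ) :
    scale a (uu m F i)
      = 1 - PowerSeries.C (v ^ (2 * (i : ℤ) - m - 1 + a)) * PowerSeries.X *
          ∏ j ∈ Finset.Icc 1 (m - 2), scale (2 * (i : ℤ) - 2 * (j : ℤ) - 2 + a) F := by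
  simp only [uu, scale_sub, scale_one_eq, scale_mul, scale_C, scale_X, scale_prod, scale_scale]
  rw [← mul_assoc, ← map_mul, ← zpow_add₀ v_ne_zero]
  congr 1
  congr 1
  exact Finset.prod_congr rfl fun j _ => scale_congr (by ring) F

lemma uu_shift (m : ℕ) (F : PowerSeries K) (i : ℕ) :
    scale (-1) (uu m F (i + 1)) = scale 1 (uu m F i) := by
  rw [scale_uu, scale_uu]
  push_cast
  congr 2
  · congr 1
    ring_nf
  · exact Finset.prod_congr rfl fun j _ => scale_congr (by ring) F


lemma prod_split_top (n : ℕ) (hn : 1 ≤ n) (f : ℕ → PowerSeries K) :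
    ∏ i ∈ Finset.Icc 1 n, f i = (∏ i ∈ Finset.range (n - 1), f (i + 1)) * f n := by
  obtain ⟨k, rfl⟩ : ∃ k, n = k + 1 := ⟨n - 1, by omega⟩
  rw [prod_Icc_one, Finset.prod_range_succ, Nat.add_sub_cancel]
  congr 1
  · exact Finset.prod_congr rfl fun i _ => by rw [Nat.add_comm 1 i]
  · rw [Nat.add_comm 1 k]

lemma prod_split_bot (n : ℕ) (hn : 1 ≤ n) (f : ℕ → PowerSeries K) :
    ∏ i ∈ Finset.Icc 1 n, f i = (∏ i ∈ Finset.range (n - 1), f (i + 2)) * f 1 := by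
  obtain ⟨k, rfl⟩ : ∃ k, n = k + 1 := ⟨n - 1, by omega⟩
  rw [prod_Icc_one, Finset.prod_range_succ', Nat.add_sub_cancel]
  congr 1
  exact Finset.prod_congr rfl fun i _ => by rw [show 1 + (i + 1) = i + 2 by omega]

set_option maxHeartbeats 1000000 in
/-- The solution of the algebraic functional equation satisfies the
`v`-difference equation `ΔF(t) = ∇^(m-1)(t·Π_{i=1}^{m-1} F(v^(m-2i) t))`. -/
theorem F_vdifference (m : ℕ) (hm : 2 ≤ m) (F : PowerSeries K)
    (h0 : PowerSeries.coeff 0 F = 1) (hF : F = rhsF m F) :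
    delta F = nabla ((m : ℤ) - 1)
      (PowerSeries.X * ∏ i ∈ Finset.Icc 1 (m - 1), scale ((m : ℤ) - 2 * (i : ℤ)) F) := by
  have hm1 : (1:ℕ) ≤ m - 1 := by omega
  have hcast1 : ((m - 1 : ℕ) : ℤ) = (m : ℤ) - 1 := by omega
  -- the key algebraic relation, inverse-free
  have key : F * ∏ i ∈ Finset.Icc 1 m, uu m F i = 1 := by
    nth_rewrite 1 [hF]
    rw [rhsF_eq, ← Finset.prod_mul_distrib]
    refine Finset.prod_eq_one fun i _ => PowerSeries.inv_mul_cancel (uu m F i) ?_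
    rw [const_uu]
    exact one_ne_zero
  -- scaled versions, with the products split
  have keyA : scale 1 F *
      ((∏ i ∈ Finset.range (m - 1), scale 1 (uu m F (i + 1))) * scale 1 (uu m F m)) = 1 := by
    have h := congrArg (scale 1) key
    rw [scale_mul, scale_one_eq, scale_prod] at h
    rw [prod_split_top m (by omega)] at h
    exact h
  have keyB : scale (-1) F *
      ((∏ i ∈ Finset.range (m - 1), scale 1 (uu m F (i + 1))) * scale 1 (uu m F 0)) = 1 := by
    have h := congrArg (scale (-1)) key
    rw [scale_mul, scale_one_eq, scale_prod] at h
    have hsh : ∀ i ∈ Finset.Icc 1 m, scale (-1) (uu m F i) = scale 1 (uu m F (i - 1)) := by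
      intro i hi
      have h1 : (1:ℕ) ≤ i := (Finset.mem_Icc.mp hi).1
      rw [show i = (i - 1) + 1 from (Nat.succ_pred_eq_of_pos h1).symm, uu_shift,
        Nat.add_sub_cancel]
    rw [Finset.prod_congr rfl hsh] at h
    rw [prod_split_bot m (by omega)] at h
    simpa using h
  have hQne : (∏ i ∈ Finset.range (m - 1), scale 1 (uu m F (i + 1))) ≠ 0 := by
    intro h
    rw [h, zero_mul, mul_zero] at keyA
    exact one_ne_zero keyA.symm
  have hAB : scale 1 F * scale 1 (uu m F m) = scale (-1) F * scale 1 (uu m F 0) := by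
    apply mul_right_cancel₀ hQne
    linear_combination keyA - keyB
  -- the two sides of the ∇ expression
  have I1 : PowerSeries.C v * scale ((m : ℤ) - 1)
      (PowerSeries.X * ∏ i ∈ Finset.Icc 1 (m - 1), scale ((m : ℤ) - 2 * (i : ℤ)) F)
      = scale 1 F * (1 - scale 1 (uu m F m)) := by
    rw [scale_uu, sub_sub_cancel]
    rw [scale_mul, scale_X, scale_prod]
    simp only [scale_scale]
    rw [prod_split_top (m - 1) hm1]
    rw [show m - 1 - 1 = m - 2 by omega]
    rw [prod_Icc_one (m - 2)]
    have hP : ∀ i ∈ Finset.range (m - 2),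
        scale ((m:ℤ) - 1 + ((m:ℤ) - 2 * ((i + 1 : ℕ) : ℤ))) F
          = scale (2 * (m:ℤ) - 2 * ((1 + i : ℕ) : ℤ) - 2 + 1) F := by
      intro i _
      exact scale_congr (by push_cast; ring) F
    rw [Finset.prod_congr rfl hP]
    have hlast : scale ((m:ℤ) - 1 + ((m:ℤ) - 2 * ((m - 1 : ℕ) : ℤ))) F = scale 1 F := by
      exact scale_congr (by rw [hcast1]; ring) F
    rw [hlast]
    have hc : PowerSeries.C v * PowerSeries.C (v ^ ((m:ℤ) - 1))
        = PowerSeries.C (v ^ (2 * (m:ℤ) - m - 1 + 1)) := by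
      rw [← map_mul]
      congr 1
      rw [mul_comm, ← zpow_add_one₀ v_ne_zero]
      congr 1
      ring
    linear_combination (PowerSeries.X *
      ((∏ i ∈ Finset.range (m - 2),
        scale (2 * (m:ℤ) - 2 * ((1 + i : ℕ) : ℤ) - 2 + 1) F) * scale 1 F)) * hc
  have I2 : PowerSeries.C v⁻¹ * scale (-((m : ℤ) - 1))
      (PowerSeries.X * ∏ i ∈ Finset.Icc 1 (m - 1), scale ((m : ℤ) - 2 * (i : ℤ)) F)
      = scale (-1) F * (1 - scale 1 (uu m F 0)) := by
    rw [scale_uu, sub_sub_cancel]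
    rw [scale_mul, scale_X, scale_prod]
    simp only [scale_scale]
    rw [prod_split_bot (m - 1) hm1]
    rw [show m - 1 - 1 = m - 2 by omega]
    rw [prod_Icc_one (m - 2)]
    have hP : ∀ i ∈ Finset.range (m - 2),
        scale (-((m:ℤ) - 1) + ((m:ℤ) - 2 * ((i + 2 : ℕ) : ℤ))) F
          = scale (2 * ((0 : ℕ) : ℤ) - 2 * ((1 + i : ℕ) : ℤ) - 2 + 1) F := by
      intro i _
      exact scale_congr (by push_cast; ring) F
    rw [Finset.prod_congr rfl hP]
    have hlast : scale (-((m:ℤ) - 1) + ((m:ℤ) - 2 * ((1 : ℕ) : ℤ))) F = scale (-1) F := by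
      exact scale_congr (by push_cast; ring) F
    rw [hlast]
    have hc : PowerSeries.C v⁻¹ * PowerSeries.C (v ^ (-((m:ℤ) - 1)))
        = PowerSeries.C (v ^ (2 * ((0:ℕ) : ℤ) - m - 1 + 1)) := by
      rw [← map_mul]
      congr 1
      rw [← zpow_neg_one, ← zpow_add₀ v_ne_zero]
      congr 1
      push_cast
      ring
    linear_combination (PowerSeries.X *
      ((∏ i ∈ Finset.range (m - 2),
        scale (2 * ((0:ℕ):ℤ) - 2 * ((1 + i : ℕ) : ℤ) - 2 + 1) F) * scale (-1) F)) * hc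
  rw [delta, nabla, I1, I2]
  have : scale 1 F - scale (-1) F
      = scale 1 F * (1 - scale 1 (uu m F m)) - scale (-1) F * (1 - scale 1 (uu m F 0)) := by
    linear_combination hAB
  rw [← this]
end
end

section
/- Fix m ≥ 2. Define a sequence (m_d)_{d≥0} in Q(v) by m_0 = 1 and the recursion m_d = ([P^{(m−1)d}]/[P^{d−1}]) · Σ_{d_1+⋯+d_{m−1}=d−1} v^{Σ_i (m−2i)d_i} Π_i m_{d_i}, where [P^n] = (v^{n+1} − v^{−n−1})/(v − v^{−1}) denotes the quantum integer n+1. Then the generating series F(t) = Σ_d m_d t^d satisfies the v-difference equation ΔF(t) = ∇^{(m−1)}(t·Π_{i=1}^{m−1} F(v^{m−2i} t)). -/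
open PowerSeries Finset

noncomputable section

/-- The virtual motive of projective space `ℙ^n`: the quantum integer
`v^n + v^(n-2) + ⋯ + v^(-n) = (v^(n+1) - v^(-n-1))/(v - v⁻¹)`. -/
def qP (n : ℕ) : K := (v ^ ((n : ℤ) + 1) - v ^ (-(n : ℤ) - 1)) / (v - v⁻¹)

lemma v_pow_ne_one (n : ℕ) (hn : 1 ≤ n) : (v : K) ^ n ≠ 1 := by
  intro h
  have h2 : (Polynomial.X : Polynomial ℚ) ^ n = 1 := by
    apply RatFunc.algebraMap_injective ℚ
    simpa [v, map_pow, RatFunc.algebraMap_X] using h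
  have := congrArg Polynomial.natDegree h2
  simp [Polynomial.natDegree_X_pow] at this
  omega

lemma coeff_prod_tuple {R : Type*} [CommSemiring R] (k n : ℕ) (g : Fin k → PowerSeries R) :
    PowerSeries.coeff n (∏ i, g i) =
      ∑ f ∈ Finset.Nat.antidiagonalTuple k n, ∏ i, PowerSeries.coeff (f i) (g i) := by
  rw [PowerSeries.coeff_prod]
  refine Finset.sum_nbij' (fun l => (l : Fin k → ℕ))
    (fun f => Finsupp.equivFunOnFinite.symm f) ?_ ?_ ?_ ?_ ?_
  · intro l hl
    simp only [mem_finsuppAntidiag] at hl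
    simp [Finset.Nat.mem_antidiagonalTuple, ← hl.1]
  · intro f hf
    simp only [Finset.Nat.mem_antidiagonalTuple] at hf
    simp [mem_finsuppAntidiag, ← hf]
  · intro l _; exact Finsupp.equivFunOnFinite.symm_apply_apply l
  · intro f _; exact Finsupp.equivFunOnFinite.apply_symm_apply f
  · intro l _; rfl

lemma coeff_scale (a : ℤ) (B : PowerSeries K) (d : ℕ) :
    PowerSeries.coeff d (scale a B) = v ^ (a * d) * PowerSeries.coeff d B := by
  simp [scale]

lemma v_zpow_sum {ι : Type*} (s : Finset ι) (e : ι → ℤ) :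
    (v : K) ^ (∑ i ∈ s, e i) = ∏ i ∈ s, v ^ e i := by
  classical
  induction s using Finset.cons_induction with
  | empty => simp
  | cons a s ha ih =>
    rw [Finset.sum_cons, Finset.prod_cons, zpow_add₀ v_ne_zero, ih]

/-- The sequence defined by the recursion of Corollary "practical" has generating
series satisfying the `v`-difference equation. -/
theorem recursion_vdifference (m : ℕ) (hm : 2 ≤ m) (ms : ℕ → K)
    (h0 : ms 0 = 1)
    (hrec : ∀ d : ℕ, 1 ≤ d →
      ms d = qP ((m - 1) * d) / qP (d - 1) *
        ∑ f ∈ Finset.Nat.antidiagonalTuple (m - 1) (d - 1),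
          v ^ (∑ i : Fin (m - 1), ((m : ℤ) - 2 * ((i : ℕ) + 1)) * (f i : ℤ)) *
            ∏ i : Fin (m - 1), ms (f i)) :
    delta (PowerSeries.mk ms) = nabla ((m : ℤ) - 1)
      (PowerSeries.X *
        ∏ i ∈ Finset.Icc 1 (m - 1), scale ((m : ℤ) - 2 * (i : ℤ)) (PowerSeries.mk ms)) := by
  classical
  have hv0 : v ≠ 0 := v_ne_zero
  have hvv : (v - v⁻¹ : K) ≠ 0 := by
    rw [sub_ne_zero]
    intro h
    apply v_pow_ne_one 2 (by norm_num)
    rw [sq]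
    nth_rewrite 1 [h]
    rw [inv_mul_cancel₀ hv0]
  have hnum : ∀ d : ℕ, 1 ≤ d → (v ^ (d : ℤ) - v ^ (-(d : ℤ)) : K) ≠ 0 := by
    intro d hd
    rw [sub_ne_zero]
    intro h
    apply v_pow_ne_one (2 * d) (by omega)
    have h1 : (v : K) ^ ((d : ℤ) + d) = v ^ ((-(d : ℤ)) + d) := by
      rw [zpow_add₀ hv0, zpow_add₀ hv0, h]
    rw [neg_add_cancel, zpow_zero] at h1
    calc (v : K) ^ (2 * d) = v ^ (((2 * d : ℕ)) : ℤ) := (zpow_natCast _ _).symm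
      _ = v ^ ((d : ℤ) + d) := by push_cast; ring_nf
      _ = 1 := h1
  ext d
  rcases d with _ | n
  · simp [delta, nabla, scale, coeff_zero_X_mul]
  · -- d = n + 1
    have hd1 : 1 ≤ n + 1 := by omega
    have hQ : (PowerSeries.coeff n)
          (∏ i ∈ Finset.Icc 1 (m - 1), scale ((m : ℤ) - 2 * (i : ℤ)) (PowerSeries.mk ms))
        = ∑ f ∈ Finset.Nat.antidiagonalTuple (m - 1) n,
            v ^ (∑ i : Fin (m - 1), ((m : ℤ) - 2 * ((i : ℕ) + 1)) * (f i : ℤ)) *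
              ∏ i : Fin (m - 1), ms (f i) := by
      have h1 : Finset.Icc 1 (m - 1) = Finset.Ico 1 ((m - 1) + 1) :=
        (Finset.Ico_add_one_right_eq_Icc 1 (m - 1)).symm
      rw [h1, Finset.prod_Ico_eq_prod_range]
      have h2 : (m - 1) + 1 - 1 = m - 1 := by omega
      rw [h2, ← Fin.prod_univ_eq_prod_range
        (fun i => scale ((m : ℤ) - 2 * ((1 + i : ℕ) : ℤ)) (PowerSeries.mk ms)) (m - 1)]
      rw [coeff_prod_tuple]
      refine Finset.sum_congr rfl fun f hf => ?_
      simp only [scale, coeff_mk]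
      rw [Finset.prod_mul_distrib, ← v_zpow_sum]
      congr 2
      refine Finset.sum_congr rfl fun i _ => ?_
      push_cast
      ring
    have hrec' := hrec (n + 1) hd1
    have hdn : n + 1 - 1 = n := by omega
    rw [hdn] at hrec'
    set A : ℤ := ((m : ℤ) - 1) * ((n + 1 : ℕ) : ℤ) with hA
    set S : K := ∑ f ∈ Finset.Nat.antidiagonalTuple (m - 1) n,
        v ^ (∑ i : Fin (m - 1), ((m : ℤ) - 2 * ((i : ℕ) + 1)) * (f i : ℤ)) *
          ∏ i : Fin (m - 1), ms (f i) with hS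
    have hq1 : qP n = (v ^ ((n + 1 : ℕ) : ℤ) - v ^ (-((n + 1 : ℕ) : ℤ))) * (v - v⁻¹)⁻¹ := by
      rw [qP, show ((n : ℕ) : ℤ) + 1 = ((n + 1 : ℕ) : ℤ) by push_cast; omega,
        show -((n : ℕ) : ℤ) - 1 = -((n + 1 : ℕ) : ℤ) by push_cast; omega,
        div_eq_mul_inv]
    have hq2 : qP ((m - 1) * (n + 1)) = (v ^ (A + 1) - v ^ (-A - 1)) * (v - v⁻¹)⁻¹ := by
      rw [qP, show (((m - 1) * (n + 1) : ℕ) : ℤ) + 1 = A + 1 by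
          rw [hA]; push_cast [Nat.cast_sub (by omega : 1 ≤ m)]; ring,
        show -(((m - 1) * (n + 1) : ℕ) : ℤ) - 1 = -A - 1 by
          rw [hA]; push_cast [Nat.cast_sub (by omega : 1 ≤ m)]; ring,
        div_eq_mul_inv]
    have hq1ne : qP n ≠ 0 := by
      rw [hq1]
      exact mul_ne_zero (hnum (n + 1) hd1) (inv_ne_zero hvv)
    have hkey : ms (n + 1) * qP n = qP ((m - 1) * (n + 1)) * S := by
      rw [hrec', div_mul_eq_mul_div, div_mul_cancel₀ _ hq1ne]
    have hstar : (v ^ ((n + 1 : ℕ) : ℤ) - v ^ (-((n + 1 : ℕ) : ℤ))) * ms (n + 1)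
        = (v ^ (A + 1) - v ^ (-A - 1)) * S := by
      have h3 := hkey
      rw [hq1, hq2] at h3
      apply mul_right_cancel₀ (inv_ne_zero hvv)
      linear_combination h3
    have e1 : v * v ^ A = v ^ (A + 1) := by
      rw [zpow_add₀ hv0, zpow_one, mul_comm]
    have e2 : v⁻¹ * v ^ (-A) = v ^ (-A - 1) := by
      rw [show -A - 1 = -A + (-1) by ring, zpow_add₀ hv0, zpow_neg_one, mul_comm]
    simp only [delta, nabla, map_sub, PowerSeries.coeff_C_mul, coeff_scale,
      PowerSeries.coeff_succ_X_mul, hQ, PowerSeries.coeff_mk, one_mul, neg_mul]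
    rw [← hA]
    linear_combination (v - v⁻¹)⁻¹ * hstar - (v - v⁻¹)⁻¹ * S * e1 + (v - v⁻¹)⁻¹ * S * e2
end
end

section
/- Fix m ≥ 3. Let F̄(t) ∈ Q[[t]] satisfy F̄(0)=1 and F̄(t) = (1 − t·F̄(t)^{m−2})^{−m}. Then the series U(t) = F̄(t)^{1/m} (the unique m-th root with constant term 1) satisfies the functional equation U(t) = 1 + t·U(t)^{(m−1)^2}. -/
open PowerSeries Finset

noncomputable section

/-- If `F̄(0)=1` satisfies `F̄ = (1 - t·F̄^(m-2))^(-m)` and `U` is its `m`-th root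
with constant term `1`, then `U = 1 + t·U^((m-1)²)`. -/
theorem root_functional_equation (m : ℕ) (hm : 3 ≤ m) (F U : PowerSeries ℚ)
    (h0 : PowerSeries.coeff 0 F = 1)
    (hF : F = ((1 - PowerSeries.X * F ^ (m - 2))⁻¹) ^ m)
    (hU0 : PowerSeries.coeff 0 U = 1) (hUm : U ^ m = F) :
    U = 1 + PowerSeries.X * U ^ ((m - 1) ^ 2) := by
  have h2 : 2 ≤ m := by omega
  set D : PowerSeries ℚ := 1 - PowerSeries.X * F ^ (m - 2) with hD
  have hDc : PowerSeries.constantCoeff D = 1 := by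
    simp [hD]
  have hDc' : PowerSeries.constantCoeff D ≠ 0 := by rw [hDc]; exact one_ne_zero
  have hGc : PowerSeries.constantCoeff (D⁻¹) = 1 := by
    rw [PowerSeries.constantCoeff_inv, hDc, inv_one]
  -- U = D⁻¹ by uniqueness of m-th roots
  have hUG : U = D⁻¹ := by
    have hpow : U ^ m = (D⁻¹) ^ m := by rw [hUm, hF]
    have hgeom := geom_sum₂_mul U (D⁻¹) m
    rw [hpow, sub_self] at hgeom
    have hsum : (∑ i ∈ range m, U ^ i * (D⁻¹) ^ (m - 1 - i)) ≠ 0 := by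
      intro h
      have := congrArg (PowerSeries.constantCoeff) h
      simp only [map_sum, map_mul, map_pow, hGc, PowerSeries.coeff_zero_eq_constantCoeff] at this
      rw [show (PowerSeries.constantCoeff) U = 1 from by rw [← PowerSeries.coeff_zero_eq_constantCoeff]; exact hU0] at this
      simp at this
      omega
    have := mul_eq_zero.mp hgeom
    rcases this with h | h
    · exact absurd h hsum
    · exact sub_eq_zero.mp h
  have hinv : D⁻¹ * D = 1 := PowerSeries.inv_mul_cancel D hDc'
  have key : U * D = 1 := by rw [hUG]; exact hinv
  have hFU : F ^ (m - 2) = U ^ (m * (m - 2)) := by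
    rw [← hUm, ← pow_mul]
  have : U * (1 - PowerSeries.X * U ^ (m * (m - 2))) = 1 := by
    rw [← hFU]; exact key
  have hexp : (m - 1) ^ 2 = m * (m - 2) + 1 := by
    obtain ⟨k, rfl⟩ : ∃ k, m = k + 2 := ⟨m - 2, by omega⟩
    show (k + 1) ^ 2 = (k + 2) * k + 1
    ring
  have := this
  calc U = U * (1 - PowerSeries.X * U ^ (m * (m - 2))) + PowerSeries.X * U ^ (m * (m-2)) * U := by ring
    _ = 1 + PowerSeries.X * U ^ ((m - 1) ^ 2) := by rw [this, hexp, pow_succ]; ring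
end
end

section
/- Lagrange inversion (power form): Let V(x) ∈ Q[[x]] with V(0) ≠ 0, and let U(x) ∈ Q[[x]] be the unique series satisfying U(x) = V(x·U(x)). Then for all integers k ≥ 1 and d ≥ 0, (k+d)·[x^d]U(x)^k = k·[x^d]V(x)^{k+d}, where [x^d] denotes extraction of the coefficient of x^d. -/
open PowerSeries Finset

noncomputable section

namespace LagrangeAux

/-- Coefficients of a product agree up to degree `d` if the factors do. -/
lemma coeff_mul_congr {f g f' g' : PowerSeries ℚ} {d : ℕ}
    (h : ∀ e ≤ d, PowerSeries.coeff e f = PowerSeries.coeff e g)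
    (h' : ∀ e ≤ d, PowerSeries.coeff e f' = PowerSeries.coeff e g') :
    ∀ e ≤ d, PowerSeries.coeff e (f * f') = PowerSeries.coeff e (g * g') := by
  intro e he
  rw [coeff_mul, coeff_mul]
  refine Finset.sum_congr rfl fun p hp => ?_
  rw [Finset.HasAntidiagonal.mem_antidiagonal] at hp
  rw [h p.1 (by omega), h' p.2 (by omega)]

lemma coeff_pow_congr {f g : PowerSeries ℚ} {d : ℕ}
    (h : ∀ e ≤ d, PowerSeries.coeff e f = PowerSeries.coeff e g) (k : ℕ) :
    ∀ e ≤ d, PowerSeries.coeff e (f ^ k) = PowerSeries.coeff e (g ^ k) := by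
  induction k with
  | zero => intro e he; simp
  | succ k ih =>
    intro e he
    rw [pow_succ, pow_succ]
    exact coeff_mul_congr ih h e he

lemma coeff_w_pow (U : PowerSeries ℚ) (m d : ℕ) :
    PowerSeries.coeff d ((X * U) ^ m) =
      if m ≤ d then PowerSeries.coeff (d - m) (U ^ m) else 0 := by
  rw [mul_pow, coeff_X_pow_mul']

lemma coeff_aeval (U : PowerSeries ℚ) (p : Polynomial ℚ) (d : ℕ) :
    PowerSeries.coeff d (Polynomial.aeval (X * U) p) =
      ∑ m ∈ Finset.range (d + 1), p.coeff m * PowerSeries.coeff (d - m) (U ^ m) := by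
  rw [Polynomial.aeval_eq_sum_range' (n := p.natDegree + d + 2) (by omega), map_sum]
  have h1 : ∀ i : ℕ, PowerSeries.coeff d (p.coeff i • (X * U) ^ i)
      = if i ≤ d then p.coeff i * PowerSeries.coeff (d - i) (U ^ i) else 0 := by
    intro i
    rw [LinearMap.map_smul, smul_eq_mul, coeff_w_pow, mul_ite, mul_zero]
  calc ∑ i ∈ Finset.range (p.natDegree + d + 2),
        PowerSeries.coeff d (p.coeff i • (X * U) ^ i)
      = ∑ i ∈ Finset.range (p.natDegree + d + 2),
          (if i ≤ d then p.coeff i * PowerSeries.coeff (d - i) (U ^ i) else 0) :=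
        Finset.sum_congr rfl fun i _ => h1 i
    _ = ∑ i ∈ Finset.range (d + 1),
          (if i ≤ d then p.coeff i * PowerSeries.coeff (d - i) (U ^ i) else 0) := by
        refine (Finset.sum_subset (fun i hi => ?_) (fun i _ hi => if_neg ?_)).symm
        · simp only [Finset.mem_range] at hi ⊢; omega
        · simp only [Finset.mem_range] at hi; omega
    _ = ∑ m ∈ Finset.range (d + 1), p.coeff m * PowerSeries.coeff (d - m) (U ^ m) :=
        Finset.sum_congr rfl fun i hi => if_pos (by simp only [Finset.mem_range] at hi; omega)

/-- The composition relation for powers. -/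
lemma key_R (U V : PowerSeries ℚ)
    (hUV : ∀ d : ℕ, PowerSeries.coeff d U =
      ∑ k ∈ Finset.range (d + 1),
        PowerSeries.coeff k V * PowerSeries.coeff (d - k) (U ^ k))
    (k d : ℕ) :
    PowerSeries.coeff d (U ^ k) =
      ∑ m ∈ Finset.range (d + 1),
        PowerSeries.coeff m (V ^ k) * PowerSeries.coeff (d - m) (U ^ m) := by
  set p : Polynomial ℚ := trunc (d + 1) V with hp
  have hagree : ∀ e ≤ d, PowerSeries.coeff e U
      = PowerSeries.coeff e (Polynomial.aeval (X * U) p) := by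
    intro e he
    rw [coeff_aeval, hUV e]
    refine Finset.sum_congr rfl fun m hm => ?_
    rw [Finset.mem_range] at hm
    rw [hp, coeff_trunc, if_pos (by omega)]
  have hagree2 : ∀ e ≤ d, PowerSeries.coeff e (p : PowerSeries ℚ)
      = PowerSeries.coeff e V := by
    intro e he
    rw [Polynomial.coeff_coe, hp, coeff_trunc, if_pos (by omega)]
  calc PowerSeries.coeff d (U ^ k)
      = PowerSeries.coeff d ((Polynomial.aeval (X * U) p) ^ k) :=
        coeff_pow_congr hagree k d le_rfl
    _ = PowerSeries.coeff d (Polynomial.aeval (X * U) (p ^ k)) := by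
        rw [show (Polynomial.aeval (X * U)) (p ^ k)
            = (Polynomial.aeval (X * U)) p ^ k from map_pow _ p k]
    _ = ∑ m ∈ Finset.range (d + 1), (p ^ k).coeff m * PowerSeries.coeff (d - m) (U ^ m) :=
        coeff_aeval U (p ^ k) d
    _ = ∑ m ∈ Finset.range (d + 1),
          PowerSeries.coeff m (V ^ k) * PowerSeries.coeff (d - m) (U ^ m) := by
        refine Finset.sum_congr rfl fun m hm => ?_
        rw [Finset.mem_range] at hm
        rw [← Polynomial.coeff_coe, Polynomial.coe_pow,
          coeff_pow_congr hagree2 k m (by omega)]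

lemma deriv_identity (V : PowerSeries ℚ) (k d : ℕ) (hk : 1 ≤ k) :
    PowerSeries.C ((k : ℚ) + (d : ℚ)) * (PowerSeries.derivative ℚ (V ^ k) * V ^ d)
      = PowerSeries.C (k : ℚ) * PowerSeries.derivative ℚ (V ^ (k + d)) := by
  rw [Derivation.leibniz_pow, Derivation.leibniz_pow,
    show k + d - 1 = (k - 1) + d from by omega, pow_add]
  simp only [smul_eq_mul, nsmul_eq_mul]
  rw [map_add, map_natCast, map_natCast]
  push_cast
  ring

lemma sum_eq_coeff_deriv_mul (A B : PowerSeries ℚ) (d : ℕ) (hd : 1 ≤ d) :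
    ∑ m ∈ Finset.range (d + 1),
      PowerSeries.coeff m A * ((m : ℚ) * PowerSeries.coeff (d - m) B)
      = PowerSeries.coeff (d - 1) (PowerSeries.derivative ℚ A * B) := by
  rw [coeff_mul, Finset.Nat.sum_antidiagonal_eq_sum_range_succ_mk,
    show (d - 1).succ = d from by omega]
  dsimp only
  rw [Finset.sum_range_succ']
  simp only [Nat.cast_zero, zero_mul, mul_zero, add_zero]
  refine Finset.sum_congr rfl fun j _ => ?_
  rw [coeff_derivative, show d - 1 - j = d - (j + 1) from by omega]
  push_cast
  ring

end LagrangeAux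

/-- Lagrange inversion in power form: if `U(x) = V(x·U(x))` (encoded coefficientwise:
`[x^d]U = Σ_{k≤d} [x^k]V · [x^(d-k)](U^k)`, since `V(xU) = Σ_k ([x^k]V)·x^k·U^k`)
with `V(0) ≠ 0`, then `(k+d)·[x^d]U^k = k·[x^d]V^(k+d)`. -/
theorem lagrange_inversion (U V : PowerSeries ℚ)
    (hV0 : PowerSeries.coeff 0 V ≠ 0)
    (hUV : ∀ d : ℕ, PowerSeries.coeff d U =
      ∑ k ∈ Finset.range (d + 1),
        PowerSeries.coeff k V * PowerSeries.coeff (d - k) (U ^ k)) :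
    ∀ k d : ℕ, 1 ≤ k →
      ((k : ℚ) + d) * PowerSeries.coeff d (U ^ k) =
        (k : ℚ) * PowerSeries.coeff d (V ^ (k + d)) := by
  suffices H : ∀ n k d : ℕ, k + d = n → 1 ≤ k →
      ((k : ℚ) + d) * PowerSeries.coeff d (U ^ k) =
        (k : ℚ) * PowerSeries.coeff d (V ^ (k + d)) by
    intro k d hk
    exact H (k + d) k d rfl hk
  intro n
  induction n using Nat.strong_induction_on with
  | _ n ih =>
    intro k d hnd hk
    rcases Nat.eq_zero_or_pos d with hd | hd
    · -- base case d = 0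
      subst hd
      have h0 : PowerSeries.coeff 0 U = PowerSeries.coeff 0 V := by
        have := hUV 0
        simpa using this
      simp only [Nat.cast_zero, add_zero]
      congr 1
      rw [coeff_zero_eq_constantCoeff] at h0
      simp only [coeff_zero_eq_constantCoeff, map_pow, h0]
    · -- main case d ≥ 1
      have hS : (d : ℚ) * PowerSeries.coeff d (U ^ k)
          = ∑ m ∈ Finset.range (d + 1), PowerSeries.coeff m (V ^ k)
              * ((m : ℚ) * PowerSeries.coeff (d - m) (V ^ d)) := by
        rw [LagrangeAux.key_R U V hUV k d, Finset.mul_sum]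
        refine Finset.sum_congr rfl fun m hm => ?_
        rw [Finset.mem_range] at hm
        rcases Nat.eq_zero_or_pos m with h0 | h1
        · subst h0
          simp only [pow_zero, Nat.cast_zero, zero_mul, mul_zero]
          rw [Nat.sub_zero, PowerSeries.coeff_one, if_neg (by omega)]
          ring
        · have hIH := ih d (by omega) m (d - m) (by omega) h1
          rw [show m + (d - m) = d from by omega] at hIH
          rw [Nat.cast_sub (by omega : m ≤ d)] at hIH
          have e : (m : ℚ) + ((d : ℚ) - (m : ℚ)) = (d : ℚ) := by ring
          rw [e] at hIH
          calc (d : ℚ) * (PowerSeries.coeff m (V ^ k) * PowerSeries.coeff (d - m) (U ^ m))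
              = PowerSeries.coeff m (V ^ k)
                  * ((d : ℚ) * PowerSeries.coeff (d - m) (U ^ m)) := by ring
            _ = _ := by rw [hIH]
      have hdne : (d : ℚ) ≠ 0 := Nat.cast_ne_zero.mpr (by omega)
      apply mul_left_cancel₀ hdne
      calc (d : ℚ) * (((k : ℚ) + d) * PowerSeries.coeff d (U ^ k))
          = ((k : ℚ) + d) * ((d : ℚ) * PowerSeries.coeff d (U ^ k)) := by ring
        _ = ((k : ℚ) + d) * PowerSeries.coeff (d - 1)
              (PowerSeries.derivative ℚ (V ^ k) * V ^ d) := by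
            rw [hS, LagrangeAux.sum_eq_coeff_deriv_mul (V ^ k) (V ^ d) d hd]
        _ = PowerSeries.coeff (d - 1) (PowerSeries.C ((k : ℚ) + (d : ℚ))
              * (PowerSeries.derivative ℚ (V ^ k) * V ^ d)) := by
            rw [PowerSeries.coeff_C_mul]
        _ = PowerSeries.coeff (d - 1)
              (PowerSeries.C (k : ℚ) * PowerSeries.derivative ℚ (V ^ (k + d))) := by
            rw [LagrangeAux.deriv_identity V k d hk]
        _ = (k : ℚ) * PowerSeries.coeff (d - 1)
              (PowerSeries.derivative ℚ (V ^ (k + d))) := by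
            rw [PowerSeries.coeff_C_mul]
        _ = (d : ℚ) * ((k : ℚ) * PowerSeries.coeff d (V ^ (k + d))) := by
            rw [PowerSeries.coeff_derivative, show d - 1 + 1 = d from by omega]
            push_cast [Nat.cast_sub (show 1 ≤ d from hd)]
            ring
end
end

section
/- Fix m ≥ 3. Let F̄(t), Ḡ(t) ∈ Q[[t]] with F̄(0) = Ḡ(0) = 1, F̄(t) = (1 − t F̄(t)^{m−2})^{−m}, and Ḡ'(t) = F̄(t)^{m−1}. Then for all d ≥ 1, the coefficient of t^d in Ḡ(t) equals (m/(d((m−1)d+1)))·C((m−1)^2 d + m − 1, d − 1). -/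
open PowerSeries Finset

noncomputable section

private lemma sum_range_ext' {M : Type*} [AddCommMonoid M] (f : ℕ → M) (a b : ℕ)
    (ha : ∀ j, a ≤ j → f j = 0) (hb : ∀ j, b ≤ j → f j = 0) :
    ∑ j ∈ Finset.range a, f j = ∑ j ∈ Finset.range b, f j := by
  rcases le_total a b with h | h
  · exact Finset.sum_subset (Finset.range_subset_range.2 h)
      (fun x _ hx => ha x (le_of_not_gt (by simpa using hx)))
  · exact (Finset.sum_subset (Finset.range_subset_range.2 h)
      (fun x _ hx => hb x (le_of_not_gt (by simpa using hx)))).symm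

private lemma vand' (K n s : ℕ) :
    ∑ i ∈ Finset.range (s+1), K.choose i * n.choose (s - i) = (K + n).choose s := by
  rw [Nat.add_choose_eq, Finset.Nat.sum_antidiagonal_eq_sum_range_succ_mk]

private lemma nat_sum' (K n d : ℕ) (hd : 1 ≤ d) :
    ∑ i ∈ Finset.range d, (i+1) * (K+1).choose (i+1) * n.choose (d-1-i)
      = (K+1) * (K + n).choose (d-1) := by
  have h1 : ∀ i, (i+1) * (K+1).choose (i+1) = (K+1) * K.choose i := by
    intro i
    rw [mul_comm]
    exact (Nat.add_one_mul_choose_eq K i).symm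
  calc ∑ i ∈ Finset.range d, (i+1) * (K+1).choose (i+1) * n.choose (d-1-i)
      = ∑ i ∈ Finset.range d, (K+1) * (K.choose i * n.choose (d-1-i)) := by
        refine Finset.sum_congr rfl fun i _ => ?_
        rw [h1 i, mul_assoc]
    _ = (K+1) * ∑ i ∈ Finset.range d, K.choose i * n.choose (d-1-i) := by
        rw [Finset.mul_sum]
    _ = (K+1) * (K + n).choose (d-1) := by
        rw [show d = (d-1)+1 by omega] 
        simp only [Nat.add_sub_cancel]
        rw [vand' K n (d-1)]

private lemma fuss' (p : ℕ) (hp : 1 ≤ p) (B : PowerSeries ℚ) (hB : B = 1 + X * B ^ p) :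
    ∀ d k : ℕ, 1 ≤ k → (PowerSeries.coeff d) (B ^ k) =
      ((k : ℚ) / ((p * d + k : ℕ) : ℚ)) * (((p * d + k).choose d : ℕ) : ℚ) := by
  intro d
  induction d using Nat.strong_induction_on with
  | _ d ih =>
  intro k hk
  have hk0 : ((k:ℚ)) ≠ 0 := Nat.cast_ne_zero.2 (by omega)
  have expand : (PowerSeries.coeff d) (B ^ k)
      = ∑ j ∈ Finset.range (k+1),
          ((k.choose j : ℕ) : ℚ) *
            (if j ≤ d then (PowerSeries.coeff (d - j)) (B ^ (p*j)) else 0) := by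
    conv_lhs => rw [hB]
    rw [add_comm (1 : PowerSeries ℚ) (X * B ^ p), add_pow, map_sum]
    refine Finset.sum_congr rfl fun j hj => ?_
    rw [one_pow, mul_one, mul_pow, ← pow_mul, ← map_natCast (PowerSeries.C (R := ℚ)) (k.choose j),
      PowerSeries.coeff_mul_C, PowerSeries.coeff_X_pow_mul']
    ring
  rw [expand]
  rcases Nat.eq_zero_or_pos d with rfl | hd
  · rw [Finset.sum_eq_single_of_mem 0 (Finset.mem_range.2 (by omega))]
    · simp [div_self hk0]
    · intro j _ hj
      rw [if_neg (by omega), mul_zero]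
  · -- d ≥ 1
    rw [sum_range_ext' _ (k+1) (d+1)
        (fun j hj => by
          rw [Nat.choose_eq_zero_of_lt (by omega)]
          simp)
        (fun j hj => by rw [if_neg (by omega), mul_zero]),
      Finset.sum_range_succ']
    have hzero : ((k.choose 0 : ℕ) : ℚ) *
        (if 0 ≤ d then (PowerSeries.coeff (d - 0)) (B ^ (p*0)) else 0) = 0 := by
      rw [if_pos (by omega)]
      simp [PowerSeries.coeff_one, show d ≠ 0 by omega]
    rw [hzero, add_zero]
    obtain ⟨K, rfl⟩ : ∃ K, k = K + 1 := ⟨k - 1, by omega⟩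
    have hpd0 : (((p * d : ℕ) : ℚ)) ≠ 0 := by
      have : 1 ≤ p * d := Nat.one_le_iff_ne_zero.2 (Nat.mul_ne_zero (by omega) (by omega))
      exact Nat.cast_ne_zero.2 (by omega)
    have hmain : ∑ i ∈ Finset.range d,
        (((K+1).choose (i+1) : ℕ) : ℚ) *
          (if i+1 ≤ d then (PowerSeries.coeff (d - (i+1))) (B ^ (p*(i+1))) else 0)
        = ((p:ℚ) / ((p * d : ℕ) : ℚ)) *
          ((∑ i ∈ Finset.range d, (i+1) * (K+1).choose (i+1) * (p*d).choose (d-1-i) : ℕ) : ℚ) := by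
    -- per-term via IH
      push_cast
      rw [Finset.mul_sum]
      refine Finset.sum_congr rfl fun i hi => ?_
      have hi' : i < d := Finset.mem_range.mp hi
      rw [if_pos (by omega),
        ih (d - (i+1)) (by omega) (p*(i+1)) (Nat.one_le_iff_ne_zero.2 (Nat.mul_ne_zero (by omega) (by omega)))]
      have h1 : p * (d - (i+1)) + p * (i+1) = p * d := by
        rw [← Nat.mul_add, Nat.sub_add_cancel (by omega)]
      have h2 : d - (i+1) = d - 1 - i := by omega
      rw [h1, h2]
      push_cast
      field_simp
    rw [hmain, nat_sum' K (p*d) d hd]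
    have habs : (p*d + K + 1) * (p*d + K).choose (d-1) = (p*d + K + 1).choose d * d := by
      have h := Nat.add_one_mul_choose_eq (p*d+K) (d-1)
      rwa [Nat.sub_add_cancel hd] at h
    have hT0 : (((p * d + (K+1) : ℕ) : ℚ)) ≠ 0 := Nat.cast_ne_zero.2 (by omega)
    have hd0 : ((d:ℚ)) ≠ 0 := Nat.cast_ne_zero.2 (by omega)
    have hKa : ((K : ℚ) + ((p:ℚ) * d)) = (((p*d + K : ℕ)):ℚ) := by push_cast; ring
    have habsQ : ((p:ℚ)*d + K + 1) * (((p*d + K).choose (d-1) : ℕ) : ℚ)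
        = (((p*d + K + 1).choose d : ℕ) : ℚ) * d := by
      exact_mod_cast congrArg (fun x : ℕ => (x : ℚ)) habs
    rw [show K + p*d = p*d + K by omega, show p*d + (K+1) = p*d + K + 1 by omega]
    push_cast
    push_cast at habsQ
    field_simp
    linear_combination habsQ

/-- The `t^d`-coefficient of `Ḡ`, where `Ḡ' = F̄^(m-1)` and `F̄ = (1 - t·F̄^(m-2))^(-m)`. -/
theorem coeff_Gbar (m : ℕ) (hm : 3 ≤ m) (F G : PowerSeries ℚ)
    (hF0 : PowerSeries.coeff 0 F = 1)
    (hF : F = ((1 - PowerSeries.X * F ^ (m - 2))⁻¹) ^ m)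
    (hG0 : PowerSeries.coeff 0 G = 1)
    (hG : PowerSeries.derivative ℚ G = F ^ (m - 1)) :
    ∀ d : ℕ, 1 ≤ d → PowerSeries.coeff d G =
      ((m : ℚ) / (d * (((m : ℚ) - 1) * d + 1))) *
        Nat.choose ((m - 1) ^ 2 * d + m - 1) (d - 1) := by
  intro d hd
  obtain ⟨n, rfl⟩ := Nat.exists_eq_add_of_le hm
  obtain ⟨e, rfl⟩ : ∃ e, d = e + 1 := ⟨d - 1, by omega⟩
  rw [show 3 + n - 2 = n + 1 by omega] at hF
  rw [show 3 + n - 1 = n + 2 by omega] at hG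
  set U : PowerSeries ℚ := 1 - PowerSeries.X * F ^ (n+1) with hU
  have hU0 : PowerSeries.constantCoeff U = 1 := by
    simp [hU]
  have hBU : U⁻¹ * U = 1 := PowerSeries.inv_mul_cancel U (by rw [hU0]; exact one_ne_zero)
  set B : PowerSeries ℚ := U⁻¹ with hBdef
  have hFB : F = B ^ (3 + n) := hF
  have hB : B = 1 + PowerSeries.X * B ^ ((n+2)^2) := by
    have h1 : U = 1 - PowerSeries.X * B ^ ((3+n)*(n+1)) := by
      rw [hU, hFB, ← pow_mul]
    have h2 : B * (1 - PowerSeries.X * B ^ ((3+n)*(n+1))) = 1 := by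
      rw [← h1]; exact hBU
    have h3 : (n+2)^2 = (3+n)*(n+1) + 1 := by ring
    rw [h3, pow_succ]
    linear_combination h2
  have hp : 1 ≤ (n+2)^2 := Nat.one_le_iff_ne_zero.2 (by positivity)
  have key := fuss' ((n+2)^2) hp B hB e ((3+n)*(n+2))
    (Nat.one_le_iff_ne_zero.2 (by positivity))
  have hFk : F ^ (n+2) = B ^ ((3+n)*(n+2)) := by rw [hFB, ← pow_mul]
  have hder := PowerSeries.coeff_derivative G e
  rw [hG, hFk, key] at hder
  -- hder : (k:ℚ)/(S:ℚ) * choose = coeff (e+1) G * (e+1)  (note direction)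
  have he1 : ((e:ℚ)+1) ≠ 0 := by positivity
  have hw : ((n:ℚ)+2)*((e:ℚ)+1)+1 ≠ 0 := by positivity
  have hSpos : (0:ℚ) < (((n+2)^2*e + (3+n)*(n+2) : ℕ) : ℚ) :=
    Nat.cast_pos.2 (by positivity)
  have hWpos : (0:ℚ) < ((((n+2)*(e+1) + 1 : ℕ)) : ℚ) := Nat.cast_pos.2 (by positivity)
  have hfrac : (((3+n)*(n+2) : ℕ):ℚ) / (((n+2)^2*e + (3+n)*(n+2) : ℕ):ℚ)
      = ((3+n : ℕ):ℚ) / (((n+2)*(e+1) + 1 : ℕ):ℚ) := by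
    rw [div_eq_div_iff hSpos.ne' hWpos.ne']
    push_cast
    ring
  rw [hfrac] at hder
  -- rewrite the choose top in the goal
  rw [show 3 + n - 1 = n + 2 by omega, Nat.add_sub_cancel]
  have hTop : (n+2)^2*(e+1) + (3 + n) - 1 = (n+2)^2*e + (3+n)*(n+2) := by
    rw [show 3 + n = (n+2) + 1 by omega, ← Nat.add_assoc, Nat.add_sub_cancel]
    ring
  rw [hTop]
  -- final arithmetic
  have hcoeff : PowerSeries.coeff (e+1) G
      = (((3+n : ℕ):ℚ) / (((n+2)*(e+1) + 1 : ℕ):ℚ)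
          * (((n+2)^2*e + (3+n)*(n+2)).choose e : ℚ)) / ((e:ℚ)+1) := by
    rw [eq_div_iff he1, ← hder]
  rw [hcoeff]
  have h32 : (((3+n:ℕ)):ℚ) - 1 = (n:ℚ) + 2 := by push_cast; ring
  have hDne : (((e+1:ℕ)):ℚ) * (((((3+n:ℕ)):ℚ) - 1) * (((e+1:ℕ)):ℚ) + 1) ≠ 0 := by
    rw [h32]; positivity
  have hWe : ((((n+2)*(e+1) + 1:ℕ)):ℚ) * ((e:ℚ)+1) ≠ 0 := mul_ne_zero hWpos.ne' he1
  rw [div_mul_eq_mul_div, div_mul_eq_mul_div, div_div, div_eq_div_iff hWe hDne]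
  push_cast
  ring
end
end

section
/- For every integer m ≥ 3 and d ≥ 1, the rational number (m−1)/(d((m−2)d+1)) · C((m−1)^2 d + m − 2, d − 1) is a positive integer. -/
open PowerSeries Finset

noncomputable section

/-- The rational number `(m-1)/(d((m-2)d+1)) · C((m-1)²d+m-2, d-1)` is a positive
integer (the number of intervals in the `(m-2)`-Tamari lattice of index `d`). -/
theorem integrality (m d : ℕ) (hm : 3 ≤ m) (hd : 1 ≤ d) :
    ∃ N : ℕ, 0 < N ∧
      (((m : ℚ) - 1) / (d * (((m : ℚ) - 2) * d + 1))) *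
        Nat.choose ((m - 1) ^ 2 * d + m - 2) (d - 1) = N := by
  obtain ⟨k, rfl⟩ : ∃ k, m = k + 3 := ⟨m - 3, by omega⟩
  obtain ⟨e, rfl⟩ : ∃ e, d = e + 1 := ⟨d - 1, by omega⟩
  obtain ⟨s, hs⟩ : ∃ s, s = (k + 1) * (e + 1) + 1 := ⟨_, rfl⟩
  obtain ⟨a, ha⟩ : ∃ a, a = (k + 2) ^ 2 * (e + 1) + (k + 1) := ⟨_, rfl⟩
  obtain ⟨S, hS⟩ : ∃ S, S = (k + 3) * s := ⟨_, rfl⟩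
  obtain ⟨C, hC⟩ : ∃ C, C = Nat.choose a e := ⟨_, rfl⟩
  have hatop : (k + 3 - 1) ^ 2 * (e + 1) + (k + 3) - 2 = a := by
    have h1 : k + 3 - 1 = k + 2 := by omega
    rw [h1]; omega
  have hEd : e + 1 ≤ (k + 2) ^ 2 * (e + 1) := Nat.le_mul_of_pos_left _ (by positivity)
  have hCpos : 0 < C := by rw [hC]; exact Nat.choose_pos (by omega)
  have hkey : a + 2 = S + (e + 1) := by rw [ha, hS, hs]; ring
  have hSexp : S = (k + 3) * (k + 1) * (e + 1) + (k + 3) := by rw [hS, hs]; ring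
  -- divisibility by d = e + 1
  have hd1 : (e + 1) ∣ (k + 2) * C := by
    have h1 := Nat.choose_succ_right_eq a e
    have h2 : a - e = S - 1 := by omega
    have h3 : S - 1 = (k + 3) * (k + 1) * (e + 1) + (k + 2) := by omega
    rw [h2, h3, ← hC] at h1
    have h1' : Nat.choose a (e + 1) * (e + 1) =
        C * ((k + 3) * (k + 1) * (e + 1)) + (k + 2) * C := by rw [h1]; ring
    have heq : (k + 2) * C =
        Nat.choose a (e + 1) * (e + 1) - C * ((k + 3) * (k + 1) * (e + 1)) := by omega
    rw [heq]
    exact Nat.dvd_sub ⟨Nat.choose a (e + 1), by ring⟩ ⟨C * ((k + 3) * (k + 1)), by ring⟩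
  -- divisibility by s
  have hs1 : s ∣ (k + 2) * C := by
    have hsdvd : s ∣ e * C := by
      rcases Nat.eq_zero_or_pos e with rfl | he
      · simp
      · obtain ⟨f, rfl⟩ : ∃ f, e = f + 1 := ⟨e - 1, by omega⟩
        have h2 := Nat.choose_succ_right_eq a f
        have h3 : a - f = S := by omega
        rw [h3, ← hC] at h2
        exact ⟨(k + 3) * Nat.choose a f, by rw [← Nat.mul_comm C (f + 1), h2, hS]; ring⟩
    have hspos : 0 < s := by omega
    have hgpos : 0 < Nat.gcd s e := Nat.gcd_pos_of_pos_left _ hspos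
    have hgp : Nat.gcd s e ∣ k + 2 := by
      have h1 : Nat.gcd s e ∣ s := Nat.gcd_dvd_left _ _
      have h2 : Nat.gcd s e ∣ (k + 1) * e := Dvd.dvd.mul_left (Nat.gcd_dvd_right _ _) _
      have h3 : s - (k + 1) * e = k + 2 := by
        have : (k + 1) * (e + 1) = (k + 1) * e + (k + 1) := by ring
        omega
      exact h3 ▸ Nat.dvd_sub h1 h2
    have hcop : Nat.Coprime (s / Nat.gcd s e) (e / Nat.gcd s e) :=
      Nat.coprime_div_gcd_div_gcd hgpos
    have hdvdC : s / Nat.gcd s e ∣ C := by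
      apply hcop.dvd_of_dvd_mul_left
      have h4 : s / Nat.gcd s e * Nat.gcd s e ∣ e / Nat.gcd s e * C * Nat.gcd s e := by
        rw [Nat.div_mul_cancel (Nat.gcd_dvd_left _ _),
          show e / Nat.gcd s e * C * Nat.gcd s e = e / Nat.gcd s e * Nat.gcd s e * C by ring,
          Nat.div_mul_cancel (Nat.gcd_dvd_right _ _)]
        exact hsdvd
      exact (Nat.mul_dvd_mul_iff_right hgpos).mp h4
    have h5 : Nat.gcd s e * (s / Nat.gcd s e) ∣ (k + 2) * C := mul_dvd_mul hgp hdvdC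
    rwa [Nat.mul_div_cancel' (Nat.gcd_dvd_left _ _)] at h5
  have hcop : Nat.Coprime (e + 1) s := by
    rw [hs]; simp [Nat.coprime_comm, Nat.coprime_mul_left_add_right]
  obtain ⟨N, hN⟩ := (hcop.mul_dvd_of_dvd_of_dvd hd1 hs1)
  have hpCpos : 0 < (k + 2) * C := Nat.mul_pos (by omega) hCpos
  refine ⟨N, ?_, ?_⟩
  · rcases Nat.eq_zero_or_pos N with rfl | h
    · rw [mul_zero] at hN; omega
    · exact h
  · rw [hatop, Nat.add_sub_cancel, ← hC]
    have hcast : ((k : ℚ) + 2) * C = ((e : ℚ) + 1) * (((k : ℚ) + 1) * ((e : ℚ) + 1) + 1) * N := by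
      have hq := congrArg (fun x : ℕ => (x : ℚ)) hN
      push_cast [hs] at hq
      linear_combination hq
    push_cast
    rw [show ((k:ℚ) + 3 - 2) = (k:ℚ) + 1 by ring]
    rw [div_mul_eq_mul_div, div_eq_iff (by positivity)]
    linear_combination hcast
end
end
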